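/- Let α, β, θ > 0 be real numbers, and let p₁ = ∑_{i=1}^∞ α^i / ∏_{j=1}^i (β + jθ) (which converges). Then the series m₁ = ∑_{i=1}^∞ i·α^i / ∏_{j=1}^i (β + jθ) converges and equals ((α − β)/θ)·p₁ + α/θ. -/

import Mathlib

/-- For `α, β, θ > 0`, if `p₁ = ∑_{i=1}^∞ α^i / ∏_{j=1}^i (β + jθ)`, then
`∑_{i=1}^∞ i·α^i / ∏_{j=1}^i (β + jθ)` converges and equals `((α - β)/θ)·p₁ + α/θ`. -/
theorem stmt_1 (α β θ : ℝ) (hα : 0 < α) (hβ : 0 < β) (hθ : 0 < θ) (p₁ : ℝ)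
    (hp₁ : HasSum (fun i : ℕ => α ^ (i + 1) / ∏ j ∈ Finset.Icc 1 (i + 1), (β + (j : ℝ) * θ)) p₁) :
    HasSum
      (fun i : ℕ => ((i : ℝ) + 1) * α ^ (i + 1) / ∏ j ∈ Finset.Icc 1 (i + 1), (β + (j : ℝ) * θ))
      ((α - β) / θ * p₁ + α / θ) := by
  have hPpos : ∀ i : ℕ, 0 < ∏ j ∈ Finset.Icc 1 i, (β + (j : ℝ) * θ) := by
    intro i
    apply Finset.prod_pos
    intro j hj
    have : (0:ℝ) ≤ (j:ℝ) := Nat.cast_nonneg j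
    nlinarith
  have hPsucc : ∀ i : ℕ, (∏ j ∈ Finset.Icc 1 (i + 1), (β + (j : ℝ) * θ))
      = (∏ j ∈ Finset.Icc 1 i, (β + (j : ℝ) * θ)) * (β + ((i:ℝ) + 1) * θ) := by
    intro i
    rw [Finset.prod_Icc_succ_top (Nat.succ_le_succ (Nat.zero_le i))]
    push_cast
    ring
  have hg1 : HasSum (fun i : ℕ => α ^ (i + 1 + 1) / ∏ j ∈ Finset.Icc 1 (i + 1), (β + (j : ℝ) * θ))
      (α * p₁) := by
    have := hp₁.mul_left α
    convert this using 2 with i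
    · rfl
    rw [pow_succ]
    ring
  have hg : HasSum (fun i : ℕ => α ^ (i + 1) / ∏ j ∈ Finset.Icc 1 i, (β + (j : ℝ) * θ))
      (α * p₁ + α) := by
    have := (hasSum_nat_add_iff
      (f := fun i : ℕ => α ^ (i + 1) / ∏ j ∈ Finset.Icc 1 i, (β + (j : ℝ) * θ)) 1).mp hg1
    simpa using this
  have hsub := (hg.sub (hp₁.mul_left β)).div_const θ
  have hval : (α * p₁ + α - β * p₁) / θ = (α - β) / θ * p₁ + α / θ := by
    field_simp
    ring
  rw [hval] at hsub
  convert hsub using 2 with i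
  · rfl
  have h0 : (∏ j ∈ Finset.Icc 1 i, (β + (j : ℝ) * θ)) ≠ 0 := (hPpos i).ne'
  have hb : β + ((i:ℝ) + 1) * θ ≠ 0 := by positivity
  rw [hPsucc i]
  field_simp
  ring
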